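/- For every integer k ≥ 0, the Sinkhorn iterates satisfy Δ_{k+1} ≤ Λ_k, i.e., max{‖u^{k+1} − u*‖∞, ‖v^{k+1} − v*‖∞} ≤ τ·(τ/(τ+η))^k·R. -/

import Mathlib

/-- The dual entropic regularized UOT objective. -/
noncomputable def dualUOT {n : ℕ} (a b : Fin n → ℝ) (C : Fin n → Fin n → ℝ)
    (τ η : ℝ) (u v : Fin n → ℝ) : ℝ :=
  η * ∑ i, ∑ j, Real.exp ((u i + v j - C i j) / η)
    + τ * ∑ i, a i * Real.exp (-(u i) / τ)
    + τ * ∑ j, b j * Real.exp (-(v j) / τ)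



lemma sum_exp_pos' {n : ℕ} (hn : 0 < n) (f : Fin n → ℝ) :
    0 < ∑ j, Real.exp (f j) :=
  Finset.sum_pos (fun _ _ => Real.exp_pos _) ⟨⟨0, hn⟩, Finset.mem_univ _⟩

lemma logsum_le' {n : ℕ} (hn : 0 < n) (f g : Fin n → ℝ) (d : ℝ)
    (h : ∀ j, f j ≤ g j + d) :
    Real.log (∑ j, Real.exp (f j)) ≤ Real.log (∑ j, Real.exp (g j)) + d := by
  have h1 : ∑ j, Real.exp (f j) ≤ (∑ j, Real.exp (g j)) * Real.exp d := by
    rw [Finset.sum_mul]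
    exact Finset.sum_le_sum fun j _ => by
      rw [← Real.exp_add]; exact Real.exp_le_exp.2 (h j)
  calc Real.log (∑ j, Real.exp (f j))
      ≤ Real.log ((∑ j, Real.exp (g j)) * Real.exp d) :=
        Real.log_le_log (sum_exp_pos' hn f) h1
    _ = Real.log (∑ j, Real.exp (g j)) + d := by
        rw [Real.log_mul (ne_of_gt (sum_exp_pos' hn g)) (Real.exp_ne_zero d),
          Real.log_exp]

lemma crit_eq' {n : ℕ} (hn : 0 < n) {η τ : ℝ} (hη : 0 < η) (hτ : 0 < τ)
    {α : ℝ} (hα : 0 < α) (w : Fin n → ℝ) (s : ℝ)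
    (hmin : ∀ t : ℝ,
      η * (∑ j, Real.exp ((s + w j) / η)) + τ * (α * Real.exp (-s / τ))
        ≤ η * (∑ j, Real.exp ((t + w j) / η)) + τ * (α * Real.exp (-t / τ))) :
    ∑ j, Real.exp ((s + w j) / η) = α * Real.exp (-s / τ) := by
  set g : ℝ → ℝ := fun t =>
    η * (∑ j, Real.exp ((t + w j) / η)) + τ * (α * Real.exp (-t / τ)) with hg
  have hloc : IsLocalMin g s := Filter.Eventually.of_forall (fun t => hmin t)
  have hderiv : HasDerivAt g
      (η * (∑ j, Real.exp ((s + w j) / η) * (1 / η))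
        + τ * (α * (Real.exp (-s / τ) * (-1 / τ)))) s := by
    have h1 : ∀ j : Fin n, HasDerivAt (fun t : ℝ => Real.exp ((t + w j) / η))
        (Real.exp ((s + w j) / η) * (1 / η)) s := by
      intro j
      have := (((hasDerivAt_id s).add_const (w j)).div_const η).exp
      simpa using this
    have hsum : HasDerivAt (fun t : ℝ => ∑ j, Real.exp ((t + w j) / η))
        (∑ j, Real.exp ((s + w j) / η) * (1 / η)) s :=
      HasDerivAt.fun_sum (fun j _ => h1 j)
    have h2 : HasDerivAt (fun t : ℝ => α * Real.exp (-t / τ))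
        (α * (Real.exp (-s / τ) * (-1 / τ))) s := by
      have := (((hasDerivAt_id s).neg.div_const τ).exp).const_mul α
      simpa using this
    exact (hsum.const_mul η).add (h2.const_mul τ)
  have hz := hloc.hasDerivAt_eq_zero hderiv
  have hS : η * (∑ j, Real.exp ((s + w j) / η) * (1 / η))
      = ∑ j, Real.exp ((s + w j) / η) := by
    rw [← Finset.sum_mul]; field_simp
  rw [hS] at hz
  have : τ * (α * (Real.exp (-s / τ) * (-1 / τ))) = -(α * Real.exp (-s / τ)) := by
    field_simp
  rw [this] at hz
  linarith

lemma coord_formula' {n : ℕ} (hn : 0 < n) {η τ : ℝ} (hη : 0 < η) (hτ : 0 < τ)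
    {α : ℝ} (hα : 0 < α) (w : Fin n → ℝ) (s : ℝ)
    (h : ∑ j, Real.exp ((s + w j) / η) = α * Real.exp (-s / τ)) :
    s = η * τ / (η + τ) * (Real.log α - Real.log (∑ j, Real.exp (w j / η))) := by
  have hshift : Real.log (∑ j, Real.exp ((s + w j) / η))
      = s / η + Real.log (∑ j, Real.exp (w j / η)) := by
    have : ∀ j, Real.exp ((s + w j) / η) = Real.exp (s / η) * Real.exp (w j / η) := by
      intro j; rw [← Real.exp_add, ← add_div]
    simp_rw [this, ← Finset.mul_sum]
    rw [Real.log_mul (Real.exp_ne_zero _) (ne_of_gt (sum_exp_pos' hn _)), Real.log_exp]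
  have hlog : s / η + Real.log (∑ j, Real.exp (w j / η))
      = Real.log α + (-s / τ) := by
    rw [← hshift, h, Real.log_mul (ne_of_gt hα) (Real.exp_ne_zero _), Real.log_exp]
  have hηττ : η + τ ≠ 0 := by positivity
  field_simp at hlog ⊢
  nlinarith [hlog]

lemma shift3' {n : ℕ} (hn : 0 < n) {η : ℝ} (s : ℝ) (p q : Fin n → ℝ) :
    Real.log (∑ j, Real.exp ((s + p j - q j) / η))
      = s / η + Real.log (∑ j, Real.exp ((p j - q j) / η)) := by
  have : ∀ j, Real.exp ((s + p j - q j) / η)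
      = Real.exp (s / η) * Real.exp ((p j - q j) / η) := by
    intro j
    rw [← Real.exp_add, ← add_div]
    ring_nf
  simp_rw [this, ← Finset.mul_sum]
  rw [Real.log_mul (Real.exp_ne_zero _) (ne_of_gt (sum_exp_pos' hn _)), Real.log_exp]

set_option maxHeartbeats 2000000 in
/-- Geometric convergence of the Sinkhorn iterates: for every `k ≥ 0`,
`max{‖u^{k+1} − u*‖∞, ‖v^{k+1} − v*‖∞} ≤ τ·(τ/(τ+η))^k·R`, where
`R = max{‖log a‖∞, ‖log b‖∞} + max{log n, ‖C‖∞/η − log n}`. -/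
theorem stmt_6 {n : ℕ} (hn : 2 ≤ n) (a b : Fin n → ℝ)
    (ha : ∀ i, 0 < a i) (hb : ∀ j, 0 < b j)
    (C : Fin n → Fin n → ℝ) (hC : ∀ i j, 0 ≤ C i j)
    (τ η : ℝ) (hτ : 0 < τ) (hη : 0 < η)
    (u v : ℕ → Fin n → ℝ)
    (h0u : u 0 = 0) (h0v : v 0 = 0)
    (heven : ∀ k : ℕ, Even k →
      (u (k + 1) = fun i => (η * τ / (η + τ)) *
          (u k i / η + Real.log (a i)
            - Real.log (∑ j, Real.exp ((u k i + v k j - C i j) / η))))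
        ∧ v (k + 1) = v k)
    (hodd : ∀ k : ℕ, Odd k →
      (v (k + 1) = fun j => (η * τ / (η + τ)) *
          (v k j / η + Real.log (b j)
            - Real.log (∑ i, Real.exp ((u k i + v k j - C i j) / η))))
        ∧ u (k + 1) = u k)
    (ustar vstar : Fin n → ℝ)
    (hmin : ∀ p q : Fin n → ℝ, dualUOT a b C τ η ustar vstar ≤ dualUOT a b C τ η p q) :
    ∀ k : ℕ, max ‖u (k + 1) - ustar‖ ‖v (k + 1) - vstar‖
      ≤ τ * (τ / (τ + η)) ^ k *
        (max ‖(fun i => Real.log (a i))‖ ‖(fun j => Real.log (b j))‖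
          + max (Real.log n) (‖C‖ / η - Real.log n)) := by
  have hnpos : 0 < n := lt_of_lt_of_le two_pos hn
  set c : ℝ := η * τ / (η + τ) with hc
  set q : ℝ := τ / (τ + η) with hq
  set A : ℝ := max ‖(fun i => Real.log (a i))‖ ‖(fun j => Real.log (b j))‖ with hA
  set Dn : ℝ := max (Real.log n) (‖C‖ / η - Real.log n) with hDn
  have hητ : (0:ℝ) < η + τ := by linarith
  have hq0 : 0 ≤ q := by positivity
  have hq1 : q ≤ 1 := by
    rw [hq, div_le_one (by linarith)]; linarith
  have hcq : c = q * η := by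
    rw [hc, hq]; field_simp; ring
  have hc0 : 0 < c := by rw [hc]; positivity
  have hA0 : 0 ≤ A := le_trans (norm_nonneg _) (le_max_left _ _)
  have hlogn0 : 0 ≤ Real.log n :=
    Real.log_nonneg (by exact_mod_cast Nat.one_le_iff_ne_zero.2 (by omega))
  have hDn0 : 0 ≤ Dn := le_trans hlogn0 (le_max_left _ _)
  have hR0 : 0 ≤ A + Dn := by linarith
  -- stationarity of the minimizer
  have hminU : ∀ i, ∀ t : ℝ,
      η * (∑ j, Real.exp ((ustar i + (vstar j - C i j)) / η))
          + τ * (a i * Real.exp (-(ustar i) / τ))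
        ≤ η * (∑ j, Real.exp ((t + (vstar j - C i j)) / η))
          + τ * (a i * Real.exp (-t / τ)) := by
    intro i
    set K : ℝ := η * ∑ i' ∈ Finset.univ.erase i, ∑ j,
          Real.exp ((ustar i' + vstar j - C i' j) / η)
        + (τ * ∑ i' ∈ Finset.univ.erase i, a i' * Real.exp (-(ustar i') / τ)
          + τ * ∑ j, b j * Real.exp (-(vstar j) / τ)) with hK
    have split : ∀ s : ℝ, dualUOT a b C τ η (Function.update ustar i s) vstar =
        (η * (∑ j, Real.exp ((s + (vstar j - C i j)) / η))
          + τ * (a i * Real.exp (-s / τ))) + K := by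
      intro s
      unfold dualUOT
      have e1 : ∑ i', ∑ j, Real.exp ((Function.update ustar i s i' + vstar j - C i' j) / η)
          = (∑ j, Real.exp ((s + (vstar j - C i j)) / η))
            + ∑ i' ∈ Finset.univ.erase i, ∑ j, Real.exp ((ustar i' + vstar j - C i' j) / η) := by
        conv_lhs => rw [← Finset.add_sum_erase Finset.univ _ (Finset.mem_univ i)]
        congr 1
        · refine Finset.sum_congr rfl fun j _ => ?_
          rw [Function.update_self]
          congr 1
          ring
        · refine Finset.sum_congr rfl fun i' hi' => Finset.sum_congr rfl fun j _ => ?_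
          rw [Function.update_of_ne (Finset.ne_of_mem_erase hi')]
      have e2 : ∑ i', a i' * Real.exp (-(Function.update ustar i s i') / τ)
          = a i * Real.exp (-s / τ)
            + ∑ i' ∈ Finset.univ.erase i, a i' * Real.exp (-(ustar i') / τ) := by
        conv_lhs => rw [← Finset.add_sum_erase Finset.univ _ (Finset.mem_univ i)]
        congr 1
        · rw [Function.update_self]
        · refine Finset.sum_congr rfl fun i' hi' => ?_
          rw [Function.update_of_ne (Finset.ne_of_mem_erase hi')]
      rw [e1, e2, hK]
      ring
    intro t
    have h1 := hmin (Function.update ustar i t) vstar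
    rw [split t] at h1
    have h2 : dualUOT a b C τ η ustar vstar =
        (η * (∑ j, Real.exp ((ustar i + (vstar j - C i j)) / η))
          + τ * (a i * Real.exp (-(ustar i) / τ))) + K := by
      have := split (ustar i)
      rwa [Function.update_eq_self] at this
    rw [h2] at h1
    linarith
  have hminV : ∀ j, ∀ t : ℝ,
      η * (∑ i, Real.exp ((vstar j + (ustar i - C i j)) / η))
          + τ * (b j * Real.exp (-(vstar j) / τ))
        ≤ η * (∑ i, Real.exp ((t + (ustar i - C i j)) / η))
          + τ * (b j * Real.exp (-t / τ)) := by
    intro j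
    set K : ℝ := η * ∑ j' ∈ Finset.univ.erase j, ∑ i,
          Real.exp ((ustar i + vstar j' - C i j') / η)
        + (τ * ∑ i, a i * Real.exp (-(ustar i) / τ)
          + τ * ∑ j' ∈ Finset.univ.erase j, b j' * Real.exp (-(vstar j') / τ)) with hK
    have split : ∀ s : ℝ, dualUOT a b C τ η ustar (Function.update vstar j s) =
        (η * (∑ i, Real.exp ((s + (ustar i - C i j)) / η))
          + τ * (b j * Real.exp (-s / τ))) + K := by
      intro s
      unfold dualUOT
      have e1 : ∑ i, ∑ j', Real.exp ((ustar i + Function.update vstar j s j' - C i j') / η)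
          = (∑ i, Real.exp ((s + (ustar i - C i j)) / η))
            + ∑ j' ∈ Finset.univ.erase j, ∑ i, Real.exp ((ustar i + vstar j' - C i j') / η) := by
        rw [Finset.sum_comm]
        conv_lhs => rw [← Finset.add_sum_erase Finset.univ _ (Finset.mem_univ j)]
        congr 1
        · refine Finset.sum_congr rfl fun i _ => ?_
          rw [Function.update_self]
          congr 1
          ring
        · refine Finset.sum_congr rfl fun j' hj' => Finset.sum_congr rfl fun i _ => ?_
          rw [Function.update_of_ne (Finset.ne_of_mem_erase hj')]
      have e2 : ∑ j', b j' * Real.exp (-(Function.update vstar j s j') / τ)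
          = b j * Real.exp (-s / τ)
            + ∑ j' ∈ Finset.univ.erase j, b j' * Real.exp (-(vstar j') / τ) := by
        conv_lhs => rw [← Finset.add_sum_erase Finset.univ _ (Finset.mem_univ j)]
        congr 1
        · rw [Function.update_self]
        · refine Finset.sum_congr rfl fun j' hj' => ?_
          rw [Function.update_of_ne (Finset.ne_of_mem_erase hj')]
      rw [e1, e2, hK]
      ring
    intro t
    have h1 := hmin ustar (Function.update vstar j t)
    rw [split t] at h1
    have h2 : dualUOT a b C τ η ustar vstar =
        (η * (∑ i, Real.exp ((vstar j + (ustar i - C i j)) / η))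
          + τ * (b j * Real.exp (-(vstar j) / τ))) + K := by
      have := split (vstar j)
      rwa [Function.update_eq_self] at this
    rw [h2] at h1
    linarith
  have hUstar : ∀ i, ustar i
      = c * (Real.log (a i) - Real.log (∑ j, Real.exp ((vstar j - C i j) / η))) := by
    intro i
    exact coord_formula' hnpos hη hτ (ha i) (fun j => vstar j - C i j) (ustar i)
      (crit_eq' hnpos hη hτ (ha i) (fun j => vstar j - C i j) (ustar i) (hminU i))
  have hVstar : ∀ j, vstar j
      = c * (Real.log (b j) - Real.log (∑ i, Real.exp ((ustar i - C i j) / η))) := by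
    intro j
    exact coord_formula' hnpos hη hτ (hb j) (fun i => ustar i - C i j) (vstar j)
      (crit_eq' hnpos hη hτ (hb j) (fun i => ustar i - C i j) (vstar j) (hminV j))
  -- iterate formulas
  have hUk : ∀ k : ℕ, Even k → ∀ i, u (k + 1) i
      = c * (Real.log (a i) - Real.log (∑ j, Real.exp ((v k j - C i j) / η))) := by
    intro k hk i
    rw [(heven k hk).1]
    simp only
    rw [shift3' hnpos (u k i) (v k) (C i)]
    ring
  have hVk : ∀ k : ℕ, Odd k → ∀ j, v (k + 1) j
      = c * (Real.log (b j) - Real.log (∑ i, Real.exp ((u k i - C i j) / η))) := by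
    intro k hk j
    rw [(hodd k hk).1]
    simp only
    have : (∑ i, Real.exp ((u k i + v k j - C i j) / η))
        = ∑ i, Real.exp ((v k j + u k i - C i j) / η) := by
      refine Finset.sum_congr rfl fun i _ => ?_
      congr 1
      ring
    rw [this, shift3' hnpos (v k j) (u k) (fun i => C i j)]
    ring
  -- Lipschitz estimate for the log-sum-exp map
  have lip : ∀ (p p' D : Fin n → ℝ),
      |Real.log (∑ j, Real.exp ((p j - D j) / η))
        - Real.log (∑ j, Real.exp ((p' j - D j) / η))| ≤ ‖p - p'‖ / η := by
    intro p p' D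
    have key : ∀ (x y : Fin n → ℝ),
        Real.log (∑ j, Real.exp ((x j - D j) / η))
          ≤ Real.log (∑ j, Real.exp ((y j - D j) / η)) + ‖x - y‖ / η := by
      intro x y
      refine logsum_le' hnpos _ _ _ fun j => ?_
      have h1 : |x j - y j| ≤ ‖x - y‖ := by
        have := norm_le_pi_norm (x - y) j
        simpa [Real.norm_eq_abs] using this
      have h2 := abs_le.1 h1
      rw [← add_div]
      exact div_le_div_of_nonneg_right (by linarith [h2.1, h2.2]) hη.le
    have h1 := key p p'
    have h2 := key p' p
    rw [norm_sub_rev p' p] at h2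
    rw [abs_le]
    constructor <;> linarith
  have normle : ∀ (x : Fin n → ℝ) (t : ℝ), 0 ≤ t → (∀ i, |x i| ≤ t) → ‖x‖ ≤ t := by
    intro x t ht h
    refine (pi_norm_le_iff_of_nonneg ht).2 fun i => ?_
    rw [Real.norm_eq_abs]; exact h i
  have hcdiv : ∀ d : ℝ, c * (d / η) = q * d := by
    intro d
    rw [hcq]
    field_simp
  -- contraction properties
  have conU : ∀ k : ℕ, Even k → ‖u (k + 1) - ustar‖ ≤ q * ‖v k - vstar‖ := by
    intro k hk
    refine normle _ _ (by positivity) fun i => ?_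
    rw [Pi.sub_apply, hUk k hk i, hUstar i]
    have e : c * (Real.log (a i) - Real.log (∑ j, Real.exp ((v k j - C i j) / η)))
        - c * (Real.log (a i) - Real.log (∑ j, Real.exp ((vstar j - C i j) / η)))
        = c * (Real.log (∑ j, Real.exp ((vstar j - C i j) / η))
            - Real.log (∑ j, Real.exp ((v k j - C i j) / η))) := by ring
    rw [e, abs_mul, abs_of_pos hc0]
    have h1 := lip vstar (v k) (C i)
    rw [norm_sub_rev] at h1
    refine le_trans (mul_le_mul_of_nonneg_left h1 hc0.le) (le_of_eq ?_)
    exact hcdiv _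
  have conV : ∀ k : ℕ, Odd k → ‖v (k + 1) - vstar‖ ≤ q * ‖u k - ustar‖ := by
    intro k hk
    refine normle _ _ (by positivity) fun j => ?_
    rw [Pi.sub_apply, hVk k hk j, hVstar j]
    have e : c * (Real.log (b j) - Real.log (∑ i, Real.exp ((u k i - C i j) / η)))
        - c * (Real.log (b j) - Real.log (∑ i, Real.exp ((ustar i - C i j) / η)))
        = c * (Real.log (∑ i, Real.exp ((ustar i - C i j) / η))
            - Real.log (∑ i, Real.exp ((u k i - C i j) / η))) := by ring
    rw [e, abs_mul, abs_of_pos hc0]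
    have h1 := lip ustar (u k) (fun i => C i j)
    rw [norm_sub_rev] at h1
    refine le_trans (mul_le_mul_of_nonneg_left h1 hc0.le) (le_of_eq ?_)
    exact hcdiv _
  -- bounds on the log-sum-exp terms
  have hCub : ∀ i j, |C i j| ≤ ‖C‖ := by
    intro i j
    calc |C i j| = ‖C i j‖ := (Real.norm_eq_abs _).symm
      _ ≤ ‖C i‖ := norm_le_pi_norm (C i) j
      _ ≤ ‖C‖ := norm_le_pi_norm C i
  have hXub : ∀ (x D : Fin n → ℝ), (∀ j, 0 ≤ D j) →
      Real.log (∑ j, Real.exp ((x j - D j) / η)) ≤ Real.log n + ‖x‖ / η := by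
    intro x D hD
    have h0 := logsum_le' hnpos (fun j => (x j - D j) / η) (fun _ => (0:ℝ)) (‖x‖ / η)
      (fun j => by
        show (x j - D j) / η ≤ 0 + ‖x‖ / η
        rw [zero_add]
        have h1 : |x j| ≤ ‖x‖ := by
          simpa [Real.norm_eq_abs] using norm_le_pi_norm x j
        exact div_le_div_of_nonneg_right (by linarith [(abs_le.1 h1).2, hD j]) hη.le)
    simpa using h0
  have hXlb : ∀ (x D : Fin n → ℝ) (cD : ℝ), (∀ j, |D j| ≤ cD) →
      Real.log n - (‖x‖ + cD) / η ≤ Real.log (∑ j, Real.exp ((x j - D j) / η)) := by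
    intro x D cD hD
    have h0 := logsum_le' hnpos (fun _ => (0:ℝ)) (fun j => (x j - D j) / η) ((‖x‖ + cD) / η)
      (fun j => by
        show (0:ℝ) ≤ (x j - D j) / η + (‖x‖ + cD) / η
        rw [← add_div]
        refine div_nonneg ?_ hη.le
        have h1 : |x j| ≤ ‖x‖ := by
          simpa [Real.norm_eq_abs] using norm_le_pi_norm x j
        linarith [(abs_le.1 h1).1, (abs_le.1 (hD j)).2])
    have h2 : Real.log n ≤ Real.log (∑ j, Real.exp ((x j - D j) / η)) + (‖x‖ + cD) / η := by
      simpa using h0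
    linarith
  -- bound on the minimizer
  have hfixbound : ∀ (s : ℝ) (X lA m : ℝ), |lA| ≤ A → 0 ≤ m →
      X ≤ Real.log n + m / η → Real.log n - (m + ‖C‖) / η ≤ X →
      s = c * (lA - X) → |s| ≤ c * (A + Dn + m / η) := by
    intro s X lA m h3 hm0 h1 h2 hs
    have h3' := abs_le.1 h3
    have h5 : Real.log n ≤ Dn := le_max_left _ _
    have h6 : ‖C‖ / η - Real.log n ≤ Dn := le_max_right _ _
    have h8 : (m + ‖C‖) / η = m / η + ‖C‖ / η := add_div _ _ _
    rw [hs, abs_mul, abs_of_pos hc0]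
    refine mul_le_mul_of_nonneg_left ?_ hc0.le
    rw [abs_le]
    constructor <;> [skip; skip] <;> linarith
  have hUb : ‖ustar‖ ≤ c * (A + Dn + max ‖ustar‖ ‖vstar‖ / η) := by
    refine normle _ _ (by positivity) fun i => ?_
    have h3 : |Real.log (a i)| ≤ A :=
      le_trans (by simpa [Real.norm_eq_abs] using
        norm_le_pi_norm (fun i => Real.log (a i)) i) (le_max_left _ _)
    have hm0 : (0:ℝ) ≤ max ‖ustar‖ ‖vstar‖ := le_trans (norm_nonneg _) (le_max_left _ _)
    have h1 : Real.log (∑ j, Real.exp ((vstar j - C i j) / η))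
        ≤ Real.log n + max ‖ustar‖ ‖vstar‖ / η := by
      refine le_trans (hXub vstar (C i) (hC i)) ?_
      have := div_le_div_of_nonneg_right (le_max_right ‖ustar‖ ‖vstar‖) hη.le
      linarith
    have h2 : Real.log n - (max ‖ustar‖ ‖vstar‖ + ‖C‖) / η
        ≤ Real.log (∑ j, Real.exp ((vstar j - C i j) / η)) := by
      refine le_trans ?_ (hXlb vstar (C i) ‖C‖ (hCub i))
      have h4 : ‖vstar‖ + ‖C‖ ≤ max ‖ustar‖ ‖vstar‖ + ‖C‖ := by
        have := le_max_right ‖ustar‖ ‖vstar‖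
        linarith
      have := div_le_div_of_nonneg_right h4 hη.le
      linarith
    exact hfixbound _ _ _ _ h3 hm0 h1 h2 (hUstar i)
  have hVb : ‖vstar‖ ≤ c * (A + Dn + max ‖ustar‖ ‖vstar‖ / η) := by
    refine normle _ _ (by positivity) fun j => ?_
    have h3 : |Real.log (b j)| ≤ A :=
      le_trans (by simpa [Real.norm_eq_abs] using
        norm_le_pi_norm (fun j => Real.log (b j)) j) (le_max_right _ _)
    have hm0 : (0:ℝ) ≤ max ‖ustar‖ ‖vstar‖ := le_trans (norm_nonneg _) (le_max_left _ _)
    have h1 : Real.log (∑ i, Real.exp ((ustar i - C i j) / η))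
        ≤ Real.log n + max ‖ustar‖ ‖vstar‖ / η := by
      refine le_trans (hXub ustar (fun i => C i j) (fun i => hC i j)) ?_
      have := div_le_div_of_nonneg_right (le_max_left ‖ustar‖ ‖vstar‖) hη.le
      linarith
    have h2 : Real.log n - (max ‖ustar‖ ‖vstar‖ + ‖C‖) / η
        ≤ Real.log (∑ i, Real.exp ((ustar i - C i j) / η)) := by
      refine le_trans ?_ (hXlb ustar (fun i => C i j) ‖C‖ (fun i => hCub i j))
      have h4 : ‖ustar‖ + ‖C‖ ≤ max ‖ustar‖ ‖vstar‖ + ‖C‖ := by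
        have := le_max_left ‖ustar‖ ‖vstar‖
        linarith
      have := div_le_div_of_nonneg_right h4 hη.le
      linarith
    exact hfixbound _ _ _ _ h3 hm0 h1 h2 (hVstar j)
  have hm : max ‖ustar‖ ‖vstar‖ ≤ τ * (A + Dn) := by
    set m := max ‖ustar‖ ‖vstar‖ with hm'
    have h0 : 0 ≤ m := le_trans (norm_nonneg _) (le_max_left _ _)
    have h1 : m ≤ c * (A + Dn + m / η) := max_le hUb hVb
    have e : c * (A + Dn + m / η) = c * (A + Dn) + q * m := by
      rw [hcq]; field_simp
    rw [e] at h1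
    have e2 : (1 - q) * (τ + η) = η := by rw [hq]; field_simp; ring
    have e3 : c * (τ + η) = η * τ := by rw [hc]; field_simp; ring
    have h2 : (m * (1 - q)) * (τ + η) ≤ (c * (A + Dn)) * (τ + η) :=
      mul_le_mul_of_nonneg_right (by linarith) (by linarith)
    have e4 : (m * (1 - q)) * (τ + η) = m * η := by rw [mul_assoc, e2]
    have e5 : (c * (A + Dn)) * (τ + η) = η * τ * (A + Dn) := by
      rw [mul_right_comm, e3]
    rw [e4, e5] at h2
    nlinarith [h2, hη]
  -- the main induction
  suffices H : ∀ k : ℕ, ‖u (k + 1) - ustar‖ ≤ τ * q ^ k * (A + Dn)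
      ∧ ‖v (k + 1) - vstar‖ ≤ τ * q ^ k * (A + Dn) by
    intro k
    exact max_le (H k).1 (H k).2
  intro k
  induction k with
  | zero =>
    have hv1 : v (0 + 1) = v 0 := (heven 0 Even.zero).2
    have hnv : ‖v (0 + 1) - vstar‖ = ‖vstar‖ := by
      rw [hv1, h0v, zero_sub, norm_neg]
    have hvb : ‖vstar‖ ≤ τ * (A + Dn) :=
      le_trans (le_max_right _ _) hm
    constructor
    · have h1 := conU 0 Even.zero
      have h2 : ‖v 0 - vstar‖ = ‖vstar‖ := by rw [h0v, zero_sub, norm_neg]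
      calc ‖u (0 + 1) - ustar‖ ≤ q * ‖v 0 - vstar‖ := h1
        _ = q * ‖vstar‖ := by rw [h2]
        _ ≤ 1 * (τ * (A + Dn)) :=
            mul_le_mul hq1 hvb (norm_nonneg _) zero_le_one
        _ = τ * q ^ 0 * (A + Dn) := by rw [pow_zero]; ring
    · rw [hnv, pow_zero]
      calc ‖vstar‖ ≤ τ * (A + Dn) := hvb
        _ = τ * 1 * (A + Dn) := by ring
  | succ k ih =>
    rcases Nat.even_or_odd k with hk | hk
    · have hodd1 := hodd (k + 1) (Even.add_one hk)
      constructor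
      · rw [hodd1.2]
        have h2 : v (k + 1) = v k := (heven k hk).2
        calc ‖u (k + 1) - ustar‖ ≤ q * ‖v k - vstar‖ := conU k hk
          _ = q * ‖v (k + 1) - vstar‖ := by rw [h2]
          _ ≤ q * (τ * q ^ k * (A + Dn)) := mul_le_mul_of_nonneg_left ih.2 hq0
          _ = τ * q ^ (k + 1) * (A + Dn) := by rw [pow_succ]; ring
      · calc ‖v (k + 1 + 1) - vstar‖ ≤ q * ‖u (k + 1) - ustar‖ :=
            conV (k + 1) (Even.add_one hk)
          _ ≤ q * (τ * q ^ k * (A + Dn)) := mul_le_mul_of_nonneg_left ih.1 hq0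
          _ = τ * q ^ (k + 1) * (A + Dn) := by rw [pow_succ]; ring
    · have heven1 := heven (k + 1) (Odd.add_one hk)
      constructor
      · calc ‖u (k + 1 + 1) - ustar‖ ≤ q * ‖v (k + 1) - vstar‖ :=
            conU (k + 1) (Odd.add_one hk)
          _ ≤ q * (τ * q ^ k * (A + Dn)) := mul_le_mul_of_nonneg_left ih.2 hq0
          _ = τ * q ^ (k + 1) * (A + Dn) := by rw [pow_succ]; ring
      · rw [heven1.2]
        have h2 : u (k + 1) = u k := (hodd k hk).2
        calc ‖v (k + 1) - vstar‖ ≤ q * ‖u k - ustar‖ := conV k hk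
          _ = q * ‖u (k + 1) - ustar‖ := by rw [h2]
          _ ≤ q * (τ * q ^ k * (A + Dn)) := mul_le_mul_of_nonneg_left ih.1 hq0
          _ = τ * q ^ (k + 1) * (A + Dn) := by rw [pow_succ]; ring
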